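/- Let p(r,s,τ) = τ² − (rs − 3)τ + r³ + s³ − 6rs + 9 as a real polynomial in three variables. If (r,s,τ) ∈ ℝ³ satisfies p(r,s,τ) = 0 and all three partial derivatives ∂p/∂r, ∂p/∂s, ∂p/∂τ vanish at (r,s,τ), then (r,s,τ) = (3,3,3). -/

import Mathlib

/-- The defining polynomial of the component `X₀` of the character variety, in the trace
coordinates `r, s, τ`. -/
def pX0 (r s τ : ℝ) : ℝ :=
  τ ^ 2 - (r * s - 3) * τ + r ^ 3 + s ^ 3 - 6 * (r * s) + 9

lemma deriv_pX0_r (r s τ : ℝ) : deriv (fun x => pX0 x s τ) r = 3 * r ^ 2 - s * τ - 6 * s := by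
  have h : HasDerivAt (fun x => pX0 x s τ) (3 * r ^ 2 - s * τ - 6 * s) r := by
    unfold pX0
    have h1 := (((hasDerivAt_id r).mul_const s).sub_const 3).mul_const τ
    have h2 := hasDerivAt_pow 3 r
    have h3 := ((hasDerivAt_id r).mul_const s).const_mul 6
    have := (((((hasDerivAt_const r (τ ^ 2)).sub h1).add h2).add_const (s ^ 3)).sub h3).add_const 9
    refine (this.congr_deriv ?_).congr_of_eventuallyEq (Filter.Eventually.of_forall fun x => ?_)
    · norm_num
      ring
    · simp only [Pi.add_apply, Pi.sub_apply, id]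
  rw [h.deriv]

lemma deriv_pX0_s (r s τ : ℝ) : deriv (fun x => pX0 r x τ) s = 3 * s ^ 2 - r * τ - 6 * r := by
  have h : HasDerivAt (fun x => pX0 r x τ) (3 * s ^ 2 - r * τ - 6 * r) s := by
    unfold pX0
    have h1 := (((hasDerivAt_id s).const_mul r).sub_const 3).mul_const τ
    have h2 := hasDerivAt_pow 3 s
    have h3 := ((hasDerivAt_id s).const_mul r).const_mul 6
    have := ((((hasDerivAt_const s (τ ^ 2)).sub h1).add_const (r ^ 3)).add h2).sub h3 |>.add_const 9
    refine (this.congr_deriv ?_).congr_of_eventuallyEq (Filter.Eventually.of_forall fun x => ?_)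
    · norm_num
      ring
    · simp only [Pi.add_apply, Pi.sub_apply, id]
  rw [h.deriv]

lemma deriv_pX0_τ (r s τ : ℝ) : deriv (fun x => pX0 r s x) τ = 2 * τ - (r * s - 3) := by
  have h : HasDerivAt (fun x => pX0 r s x) (2 * τ - (r * s - 3)) τ := by
    unfold pX0
    have h1 := hasDerivAt_pow 2 τ
    have h2 := (hasDerivAt_id τ).const_mul (r * s - 3)
    have := ((((h1.sub h2).add_const (r ^ 3)).add_const (s ^ 3)).sub_const (6 * (r * s))).add_const 9
    refine (this.congr_deriv ?_).congr_of_eventuallyEq (Filter.Eventually.of_forall fun x => ?_)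
    · norm_num
    · simp only [Pi.add_apply, Pi.sub_apply, id]
  rw [h.deriv]

/-- The unique singular point of the surface `{p = 0}`, where
`p(r,s,τ) = τ² − (rs − 3)τ + r³ + s³ − 6rs + 9`, is `(3,3,3)`: if `p` and its three
partial derivatives vanish at `(r,s,τ)`, then `(r,s,τ)` = `(3,3,3)`. -/
theorem singular_point_unique (r s τ : ℝ)
    (h0 : pX0 r s τ = 0)
    (hr : deriv (fun x => pX0 x s τ) r = 0)
    (hs : deriv (fun x => pX0 r x τ) s = 0)
    (hτ : deriv (fun x => pX0 r s x) τ = 0) :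
    (r, s, τ) = (3, 3, 3) := by
  rw [deriv_pX0_r] at hr
  rw [deriv_pX0_s] at hs
  rw [deriv_pX0_τ] at hτ
  unfold pX0 at h0
  -- r³ = s³ hence r = s
  have hcube : r ^ 3 = s ^ 3 := by linear_combination (r / 3) * hr - (s / 3) * hs
  have hrs : r = s := (Odd.strictMono_pow (R := ℝ) (by decide : Odd 3)).injective hcube
  subst hrs
  -- now r(r-3)² = 0
  have hfac : r * (r - 3) ^ 2 = 0 := by nlinarith [hr, hτ]
  rcases mul_eq_zero.mp hfac with h | h
  · exfalso
    subst h
    -- τ = -3/2, p = 27/4 ≠ 0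
    have hτ' : τ = -3 / 2 := by linarith
    rw [hτ'] at h0
    norm_num at h0
  · have hr3 : r = 3 := by
      have := sq_eq_zero_iff.mp h
      linarith
    subst hr3
    have : τ = 3 := by linarith
    subst this
    rfl
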